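/- arXiv:0809.3647 — 3 statements merged into one kernel-verified Lean document; each statement's English description precedes it below -/
import Mathlib

section
/- Let E be a real inner product space, K ⊆ E a convex compact set, V : E → ℝ continuous and strictly convex on K (StrictConvexOn ℝ K V), γ ∈ (0,1) fixed, and L ∈ ℝ. Let (a p) and (b p) be sequences in K such that for all p, V (b p) ≤ V (γ • a p + (1−γ) • b p) ≤ V (a p), and such that V (a p) → L and V (b p) → L. Then ‖a p − b p‖ → 0. -/
open Filter

/-- Key sequential lemma in the optimality proof of the Jacobi DMPC algorithm:
if the costs of the iterates `a p`, of the block minimizers `b p`, and of the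
intermediate convex combinations all converge to the same limit `L`, then the
distance between `a p` and `b p` tends to zero (by strict convexity of `V`). -/
theorem squeeze_strict_convex_dist_tendsto_zero
    {E : Type*} [NormedAddCommGroup E] [InnerProductSpace ℝ E]
    (K : Set E) (hKconv : Convex ℝ K) (hKcpt : IsCompact K)
    (V : E → ℝ) (hVcont : Continuous V) (hVsc : StrictConvexOn ℝ K V)
    (γ : ℝ) (hγ : γ ∈ Set.Ioo (0 : ℝ) 1) (L : ℝ)
    (a b : ℕ → E) (ha : ∀ p, a p ∈ K) (hb : ∀ p, b p ∈ K)
    (hlow : ∀ p, V (b p) ≤ V (γ • a p + (1 - γ) • b p))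
    (hhigh : ∀ p, V (γ • a p + (1 - γ) • b p) ≤ V (a p))
    (hVa : Tendsto (fun p => V (a p)) atTop (nhds L))
    (hVb : Tendsto (fun p => V (b p)) atTop (nhds L)) :
    Tendsto (fun p => ‖a p - b p‖) atTop (nhds 0) := by
  by_contra hcon
  rw [Metric.tendsto_atTop] at hcon
  push_neg at hcon
  obtain ⟨ε, hε, hfreq⟩ := hcon
  have hfreq' : ∃ᶠ n in atTop, ε ≤ ‖a n - b n‖ := by
    rw [frequently_atTop]
    intro N
    obtain ⟨n, hn, hd⟩ := hfreq N
    exact ⟨n, hn, by simpa [Real.dist_eq, abs_of_nonneg (norm_nonneg _)] using hd⟩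
  obtain ⟨φ, hφ, hφε⟩ := Filter.extraction_of_frequently_atTop hfreq'
  obtain ⟨x, hx, ψ, hψ, hax⟩ := hKcpt.tendsto_subseq (fun n => ha (φ n))
  obtain ⟨y, hy, χ, hχ, hby⟩ := hKcpt.tendsto_subseq (fun n => hb (φ (ψ n)))
  set σ : ℕ → ℕ := fun n => φ (ψ (χ n)) with hσ
  have haσ : Tendsto (fun n => a (σ n)) atTop (nhds x) := hax.comp hχ.tendsto_atTop
  have hbσ : Tendsto (fun n => b (σ n)) atTop (nhds y) := hby
  have hσ_mono : StrictMono σ := hφ.comp (hψ.comp hχ)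
  have hVaσ : Tendsto (fun n => V (a (σ n))) atTop (nhds L) :=
    hVa.comp hσ_mono.tendsto_atTop
  have hVbσ : Tendsto (fun n => V (b (σ n))) atTop (nhds L) :=
    hVb.comp hσ_mono.tendsto_atTop
  have hmid : Tendsto (fun n => V (γ • a (σ n) + (1 - γ) • b (σ n))) atTop (nhds L) :=
    tendsto_of_tendsto_of_tendsto_of_le_of_le hVbσ hVaσ (fun n => hlow _) (fun n => hhigh _)
  have hVx : V x = L := tendsto_nhds_unique ((hVcont.tendsto x).comp haσ) hVaσ
  have hVy : V y = L := tendsto_nhds_unique ((hVcont.tendsto y).comp hbσ) hVbσ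
  have hmid' : Tendsto (fun n => V (γ • a (σ n) + (1 - γ) • b (σ n))) atTop
      (nhds (V (γ • x + (1 - γ) • y))) := by
    have h1 : Tendsto (fun n => γ • a (σ n) + (1 - γ) • b (σ n)) atTop
        (nhds (γ • x + (1 - γ) • y)) :=
      (haσ.const_smul γ).add (hbσ.const_smul (1 - γ))
    exact (hVcont.tendsto _).comp h1
  have hVmid : V (γ • x + (1 - γ) • y) = L := tendsto_nhds_unique hmid' hmid
  have hxy : x ≠ y := by
    have hεxy : ε ≤ ‖x - y‖ := by
      have h2 : Tendsto (fun n => ‖a (σ n) - b (σ n)‖) atTop (nhds ‖x - y‖) :=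
        (haσ.sub hbσ).norm
      exact le_of_tendsto_of_tendsto' tendsto_const_nhds h2 (fun n => hφε (ψ (χ n)))
    intro h
    rw [h, sub_self, norm_zero] at hεxy
    linarith
  have hstrict : V (γ • x + (1 - γ) • y) < γ * V x + (1 - γ) * V y :=
    hVsc.2 hx hy hxy hγ.1 (by linarith [hγ.2]) (by ring)
  rw [hVx, hVy, hVmid] at hstrict
  have : γ * L + (1 - γ) * L = L := by ring
  linarith
end

section
/- Let H : Matrix (Fin n) (Fin n) ℝ be symmetric and positive semidefinite, g ∈ ℝ^n, c ∈ ℝ, and define V u = ⟪u, H.mulVec u⟫ + 2⟪g, u⟫ + c. Let blk : Fin n → Fin M partition the coordinates among M subsystems, let Ω ⊆ ℝ^n, and let v ∈ Ω. Suppose that for every subsystem i ∈ Fin M and every u ∈ Ω the block first-order condition holds: ∑_{j : blk j = i} (H.mulVec v + g) j * (u j − v j) ≥ 0. Then for every u ∈ Ω, ⟪H.mulVec v + g, u − v⟫ ≥ 0 and V u ≥ V v; i.e., v is a global minimizer of V over Ω. -/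
open Matrix

/-- Summing the block first-order optimality conditions over the subsystems yields the
global first-order condition, and hence global optimality of `v` for the convex
quadratic cost `V` over the feasible set `Ω`. -/
theorem block_optimality_implies_global_optimality {n M : ℕ}
    (H : Matrix (Fin n) (Fin n) ℝ) (hHsymm : H.IsSymm) (hHpsd : H.PosSemidef)
    (g : Fin n → ℝ) (c : ℝ)
    (V : (Fin n → ℝ) → ℝ)
    (hV : ∀ u, V u = u ⬝ᵥ H.mulVec u + 2 * (g ⬝ᵥ u) + c)
    (blk : Fin n → Fin M) (Ω : Set (Fin n → ℝ)) (v : Fin n → ℝ) (hv : v ∈ Ω)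
    (hblock : ∀ i : Fin M, ∀ u ∈ Ω,
      ∑ j ∈ Finset.univ.filter (fun j => blk j = i),
        (H.mulVec v + g) j * (u j - v j) ≥ 0) :
    ∀ u ∈ Ω, (H.mulVec v + g) ⬝ᵥ (u - v) ≥ 0 ∧ V u ≥ V v := by
  intro u hu
  have hdot : (H.mulVec v + g) ⬝ᵥ (u - v) ≥ 0 := by
    have hpart : (H.mulVec v + g) ⬝ᵥ (u - v)
        = ∑ i : Fin M, ∑ j ∈ Finset.univ.filter (fun j => blk j = i),
            (H.mulVec v + g) j * (u j - v j) := by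
      rw [Finset.sum_fiberwise]
      simp [dotProduct, Pi.sub_apply]
    rw [hpart]
    exact Finset.sum_nonneg fun i _ => hblock i u hu
  refine ⟨hdot, ?_⟩
  set w := u - v with hw
  have hwHw : 0 ≤ w ⬝ᵥ H.mulVec w := by
    have := hHpsd.dotProduct_mulVec_nonneg w
    simpa using this
  have hsym : v ⬝ᵥ H.mulVec w = w ⬝ᵥ H.mulVec v := by
    rw [dotProduct_mulVec, dotProduct_mulVec, ← hHsymm.eq]
    simp [vecMul, mulVec, dotProduct, Finset.mul_sum, Finset.sum_mul, mul_comm]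
    rw [Finset.sum_comm]
    · congr 1; ext i; congr 1; ext j; rw [hHsymm.apply]; ring
  have hu' : u = v + w := by simp [hw]
  have key : V u - V v = 2 * ((H.mulVec v + g) ⬝ᵥ w) + w ⬝ᵥ H.mulVec w := by
    rw [hV u, hV v, hu']
    simp only [mulVec_add, dotProduct_add, add_dotProduct]
    rw [hsym]
    simp [dotProduct_add, add_dotProduct]
    rw [dotProduct_comm (H.mulVec v) (u - v)]
    ring
  linarith [key, hwHw, hdot]
end

section
/- Let A : Matrix (Fin p) (Fin d) ℝ, b : Fin p → ℝ, and ℓ, v : Fin d → ℝ with v j ≥ 0 for all j. Define A⁺ entrywise by (A⁺) i j = max (A i j) 0. Then the box B(ℓ, ℓ+v) = {u : ℝ^d | ∀ j, ℓ j ≤ u j ∧ u j ≤ ℓ j + v j} is contained in the polyhedron Ω = {u : ℝ^d | ∀ i, (A.mulVec u) i ≤ b i} if and only if (A.mulVec ℓ + A⁺.mulVec v) i ≤ b i for all i. Consequently, if (ℓ*, v*) is optimal for the problem of maximizing ∑_j ln (v j) subject to A ℓ + A⁺ v ≤ b, then B(ℓ*, ℓ*+v*) is a maximum-volume box contained in Ω.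 -/
open Matrix

/-- The entrywise positive part of a matrix. -/
def posPart' {p d : ℕ} (A : Matrix (Fin p) (Fin d) ℝ) : Matrix (Fin p) (Fin d) ℝ :=
  Matrix.of fun i j => max (A i j) 0

lemma box_iff {p d : ℕ}
    (A : Matrix (Fin p) (Fin d) ℝ) (b : Fin p → ℝ)
    (ℓ v : Fin d → ℝ) (hv : ∀ j, 0 ≤ v j) :
    ({u : Fin d → ℝ | ∀ j, ℓ j ≤ u j ∧ u j ≤ ℓ j + v j} ⊆
        {u : Fin d → ℝ | ∀ i, A.mulVec u i ≤ b i} ↔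
      ∀ i, (A.mulVec ℓ + (posPart' A).mulVec v) i ≤ b i) := by
  constructor
  · intro hsub i
    set u : Fin d → ℝ := fun j => if 0 ≤ A i j then ℓ j + v j else ℓ j with hu
    have hmem : u ∈ {u : Fin d → ℝ | ∀ j, ℓ j ≤ u j ∧ u j ≤ ℓ j + v j} := by
      intro j
      by_cases h : 0 ≤ A i j <;> simp [hu, h, hv j]
    have := hsub hmem i
    have heq : A.mulVec u i = (A.mulVec ℓ + (posPart' A).mulVec v) i := by
      simp only [mulVec, dotProduct, Pi.add_apply, ← Finset.sum_add_distrib]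
      refine Finset.sum_congr rfl fun j _ => ?_
      by_cases h : 0 ≤ A i j
      · simp [hu, h, posPart', max_eq_left h, mul_add]
      · simp [hu, h, posPart', max_eq_right (le_of_not_ge h)]
    linarith [this, heq.symm.le]
  · intro hc u hu i
    refine le_trans ?_ (hc i)
    simp only [mulVec, dotProduct, Pi.add_apply, ← Finset.sum_add_distrib]
    refine Finset.sum_le_sum fun j _ => ?_
    by_cases h : 0 ≤ A i j
    · rw [posPart', Matrix.of_apply, max_eq_left h, ← mul_add]
      exact mul_le_mul_of_nonneg_left (hu j).2 h
    · rw [posPart', Matrix.of_apply, max_eq_right (le_of_not_ge h), zero_mul, add_zero]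
      exact mul_le_mul_of_nonpos_left (hu j).1 (le_of_not_ge h)

/-- Inner-box characterization used for localized constraint tightening:
the box `B(ℓ, ℓ+v)` lies inside the polyhedron `{u | A u ≤ b}` iff
`A ℓ + A⁺ v ≤ b`; consequently an optimal solution of the log-volume program
`max ∑ ln vⱼ s.t. A ℓ + A⁺ v ≤ b` gives a maximum-volume inner box. -/
theorem box_in_polyhedron_iff_and_max_volume {p d : ℕ}
    (A : Matrix (Fin p) (Fin d) ℝ) (b : Fin p → ℝ) :
    (∀ ℓ v : Fin d → ℝ, (∀ j, 0 ≤ v j) →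
      ({u : Fin d → ℝ | ∀ j, ℓ j ≤ u j ∧ u j ≤ ℓ j + v j} ⊆
          {u : Fin d → ℝ | ∀ i, A.mulVec u i ≤ b i} ↔
        ∀ i, (A.mulVec ℓ + (posPart' A).mulVec v) i ≤ b i)) ∧
    (∀ ℓs vs : Fin d → ℝ, (∀ j, 0 < vs j) →
      (∀ i, (A.mulVec ℓs + (posPart' A).mulVec vs) i ≤ b i) →
      (∀ ℓ v : Fin d → ℝ, (∀ j, 0 < v j) →
        (∀ i, (A.mulVec ℓ + (posPart' A).mulVec v) i ≤ b i) →
        ∑ j, Real.log (v j) ≤ ∑ j, Real.log (vs j)) →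
      ({u : Fin d → ℝ | ∀ j, ℓs j ≤ u j ∧ u j ≤ ℓs j + vs j} ⊆
          {u : Fin d → ℝ | ∀ i, A.mulVec u i ≤ b i} ∧
        ∀ ℓ v : Fin d → ℝ, (∀ j, 0 ≤ v j) →
          {u : Fin d → ℝ | ∀ j, ℓ j ≤ u j ∧ u j ≤ ℓ j + v j} ⊆
            {u : Fin d → ℝ | ∀ i, A.mulVec u i ≤ b i} →
          ∏ j, v j ≤ ∏ j, vs j)) := by
  constructor
  · exact fun ℓ v hv => box_iff A b ℓ v hv
  · intro ℓs vs hvs hfeas hopt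
    have hvspos : (0:ℝ) < ∏ j, vs j := Finset.prod_pos fun j _ => hvs j
    refine ⟨(box_iff A b ℓs vs fun j => (hvs j).le).mpr hfeas, ?_⟩
    intro ℓ v hv hsub
    by_cases hpos : ∀ j, 0 < v j
    · have hc := (box_iff A b ℓ v hv).mp hsub
      have hlog := hopt ℓ v hpos hc
      have h1 : ∏ j, v j = Real.exp (∑ j, Real.log (v j)) := by
        rw [Real.exp_sum]
        exact (Finset.prod_congr rfl fun j _ => (Real.exp_log (hpos j)).symm)
      have h2 : ∏ j, vs j = Real.exp (∑ j, Real.log (vs j)) := by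
        rw [Real.exp_sum]
        exact (Finset.prod_congr rfl fun j _ => (Real.exp_log (hvs j)).symm)
      rw [h1, h2]
      exact Real.exp_le_exp.mpr hlog
    · push_neg at hpos
      obtain ⟨j, hj⟩ := hpos
      have : v j = 0 := le_antisymm hj (hv j)
      calc ∏ j, v j = 0 := Finset.prod_eq_zero (Finset.mem_univ j) this
        _ ≤ ∏ j, vs j := hvspos.le
end
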